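/- Let G and H be finite simple graphs each with at least two vertices. Then the corona product G ∘ H admits a barbell partition. -/

import Mathlib

open SimpleGraph

/-- A barbell partition of a graph `G`: a partition of the vertex set into
`R`, `W1`, `W2` with `W1, W2` nonempty, no edges between `W1` and `W2`, and
every vertex of `R` has a number of neighbors in each `Wi` different from 1. -/
def IsBarbellPartition {V : Type*} (G : SimpleGraph V) (R W1 W2 : Set V) : Prop :=
  R ∪ W1 ∪ W2 = Set.univ ∧ Disjoint R W1 ∧ Disjoint R W2 ∧ Disjoint W1 W2 ∧
  W1.Nonempty ∧ W2.Nonempty ∧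
  (∀ w1 ∈ W1, ∀ w2 ∈ W2, ¬ G.Adj w1 w2) ∧
  (∀ v ∈ R, (G.neighborSet v ∩ W1).ncard ≠ 1 ∧ (G.neighborSet v ∩ W2).ncard ≠ 1)

/-- `G` admits a barbell partition. -/
def HasBarbellPartition {V : Type*} (G : SimpleGraph V) : Prop :=
  ∃ R W1 W2 : Set V, IsBarbellPartition G R W1 W2

/-- A fort of `G`: a nonempty vertex set `F` such that no vertex outside `F`
has exactly one neighbor in `F`. -/
def IsFort {V : Type*} (G : SimpleGraph V) (F : Set V) : Prop :=
  F.Nonempty ∧ ∀ v ∉ F, (G.neighborSet v ∩ F).ncard ≠ 1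

/-- The corona product `G ∘ H`: one copy of `G` and, for each vertex `i` of
`G`, a copy of `H` all of whose vertices are joined to `i`. -/
def corona {α β : Type*} (G : SimpleGraph α) (H : SimpleGraph β) :
    SimpleGraph (α ⊕ α × β) where
  Adj x y :=
    match x, y with
    | Sum.inl a, Sum.inl b => G.Adj a b
    | Sum.inl a, Sum.inr p => a = p.1
    | Sum.inr p, Sum.inl a => a = p.1
    | Sum.inr p, Sum.inr q => p.1 = q.1 ∧ H.Adj p.2 q.2
  symm := by
    constructor
    rintro (a | p) (b | q) h
    · exact h.symm
    · exact h
    · exact h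
    · exact ⟨h.1.symm, h.2.symm⟩
  loopless := by
    constructor
    rintro (a | p) h
    · exact G.irrefl h
    · exact H.irrefl h.2

/-- The corona product of two graphs each with at least two vertices admits a
barbell partition. -/
theorem corona_hasBarbellPartition {α β : Type*} [Fintype α] [Fintype β]
    (G : SimpleGraph α) (H : SimpleGraph β)
    (hα : 2 ≤ Fintype.card α) (hβ : 2 ≤ Fintype.card β) :
    HasBarbellPartition (corona G H) := by
  obtain ⟨a₁, a₂, hne⟩ := Fintype.exists_pair_of_one_lt_card hα
  have hβne : Nonempty β := Fintype.card_pos_iff.mp (by omega)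
  obtain ⟨b₀⟩ := hβne
  set W1 : Set (α ⊕ α × β) := (fun b : β => (Sum.inr (a₁, b) : α ⊕ α × β)) '' Set.univ with hW1
  set W2 : Set (α ⊕ α × β) := (fun b : β => (Sum.inr (a₂, b) : α ⊕ α × β)) '' Set.univ with hW2
  refine ⟨(W1 ∪ W2)ᶜ, W1, W2, ?_, ?_, ?_, ?_, ⟨_, ⟨b₀, trivial, rfl⟩⟩,
    ⟨_, ⟨b₀, trivial, rfl⟩⟩, ?_, ?_⟩
  · ext v; simp only [Set.mem_union, Set.mem_compl_iff, Set.mem_univ, iff_true]; tauto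
  · exact Set.disjoint_left.mpr fun v hv h1 => hv (Or.inl h1)
  · exact Set.disjoint_left.mpr fun v hv h2 => hv (Or.inr h2)
  · rw [Set.disjoint_left]
    rintro v ⟨b, -, rfl⟩ ⟨b', -, h⟩
    exact hne (congrArg Prod.fst (Sum.inr.inj h)).symm
  · rintro w1 ⟨b, -, rfl⟩ w2 ⟨b', -, rfl⟩ hadj
    exact hne hadj.1
  · rintro v hv
    have key : ∀ (a : α),
        v ∉ ((fun b : β => (Sum.inr (a, b) : α ⊕ α × β)) '' Set.univ) →
        (fun W => ((corona G H).neighborSet v ∩ W).ncard ≠ 1)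
        ((fun b : β => (Sum.inr (a, b) : α ⊕ α × β)) '' Set.univ) := by
      intro a hva
      show ((corona G H).neighborSet v ∩ _).ncard ≠ 1
      rcases v with c | p
      · by_cases hc : c = a
        · subst hc
          have : (corona G H).neighborSet (Sum.inl c) ∩
              ((fun b : β => (Sum.inr (c, b) : α ⊕ α × β)) '' Set.univ) =
              ((fun b : β => (Sum.inr (c, b) : α ⊕ α × β)) '' Set.univ) := by
            apply Set.inter_eq_self_of_subset_right
            rintro x ⟨b, -, rfl⟩
            show c = c
            rfl
          rw [this, Set.ncard_image_of_injective _ (fun x y h => (Prod.ext_iff.mp (Sum.inr.inj h)).2),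
            Set.ncard_univ, Nat.card_eq_fintype_card]
          omega
        · have : (corona G H).neighborSet (Sum.inl c) ∩
              ((fun b : β => (Sum.inr (a, b) : α ⊕ α × β)) '' Set.univ) = ∅ := by
            ext x
            simp only [Set.mem_inter_iff, Set.mem_empty_iff_false, iff_false, not_and]
            rintro hx ⟨b, -, rfl⟩
            exact hc hx
          rw [this, Set.ncard_empty]; omega
      · by_cases hp : p.1 = a
        · exact absurd ⟨p.2, trivial, by rw [← hp]⟩ hva
        · have : (corona G H).neighborSet (Sum.inr p) ∩
              ((fun b : β => (Sum.inr (a, b) : α ⊕ α × β)) '' Set.univ) = ∅ := by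
            ext x
            simp only [Set.mem_inter_iff, Set.mem_empty_iff_false, iff_false, not_and]
            rintro hx ⟨b, -, rfl⟩
            exact hp hx.1
          rw [this, Set.ncard_empty]; omega
    exact ⟨key a₁ fun h => hv (Or.inl h), key a₂ fun h => hv (Or.inr h)⟩
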